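/- Let m, n, r, s be positive integers and let 1 ≤ μ < √(mn)/(r√s). Then the set LS_{m,n}(r,s,μ) is a closed subset of ℝ^{m×n} (with respect to the Frobenius norm topology). -/

import Mathlib

open scoped BigOperators
open Matrix

noncomputable section

def mInner {m n : ℕ} (A B : Matrix (Fin m) (Fin n) ℝ) : ℝ := ∑ i, ∑ j, A i j * B i j

def frobSq {m n : ℕ} (A : Matrix (Fin m) (Fin n) ℝ) : ℝ := ∑ i, ∑ j, (A i j) ^ 2

def frobNorm {m n : ℕ} (A : Matrix (Fin m) (Fin n) ℝ) : ℝ := Real.sqrt (frobSq A)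

def vInner {p : ℕ} (u v : Fin p → ℝ) : ℝ := ∑ i, u i * v i

def vNormSq {p : ℕ} (v : Fin p → ℝ) : ℝ := ∑ i, (v i) ^ 2

def vNorm {p : ℕ} (v : Fin p → ℝ) : ℝ := Real.sqrt (vNormSq v)

/-- Number of nonzero entries of a matrix. -/
def sparseCount {m n : ℕ} (S : Matrix (Fin m) (Fin n) ℝ) : ℕ :=
  {q : Fin m × Fin n | S q.1 q.2 ≠ 0}.ncard

/-- `L` is `μ`-incoherent of rank at most `r`: `rank L ≤ r` and `L` admits a (truncated)
singular value decomposition `L = U * diagonal d * Vᵀ` with `U ∈ ℝ^{m×r}`, `V ∈ ℝ^{n×r}`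
having orthonormal columns (the top `r` left/right singular vectors) whose rows satisfy
`‖Uᵀ eᵢ‖₂ ≤ √(μ r / m)` and `‖Vᵀ fⱼ‖₂ ≤ √(μ r / n)`. -/
def Incoherent {m n : ℕ} (μ : ℝ) (r : ℕ) (L : Matrix (Fin m) (Fin n) ℝ) : Prop :=
  L.rank ≤ r ∧
  ∃ (U : Matrix (Fin m) (Fin r) ℝ) (d : Fin r → ℝ) (V : Matrix (Fin n) (Fin r) ℝ),
    Uᵀ * U = 1 ∧ Vᵀ * V = 1 ∧ (∀ k, 0 ≤ d k) ∧ L = U * Matrix.diagonal d * Vᵀ ∧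
    (∀ i : Fin m, Real.sqrt (∑ k, (U i k) ^ 2) ≤ Real.sqrt (μ * r / m)) ∧
    (∀ j : Fin n, Real.sqrt (∑ k, (V j k) ^ 2) ≤ Real.sqrt (μ * r / n))

/-- The set of low-rank plus sparse matrices `LS_{m,n}(r,s,μ)`. -/
def LS (m n r s : ℕ) (μ : ℝ) : Set (Matrix (Fin m) (Fin n) ℝ) :=
  {X | ∃ L S : Matrix (Fin m) (Fin n) ℝ,
      X = L + S ∧ Incoherent μ r L ∧ sparseCount S ≤ s}

lemma LSaux.colsum_one {p r : ℕ} (U : Matrix (Fin p) (Fin r) ℝ) (hU : Uᵀ * U = 1) (k : Fin r) :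
    ∑ i, (U i k)^2 = 1 := by
  have h := congrFun (congrFun hU k) k
  simp only [Matrix.mul_apply, Matrix.transpose_apply, Matrix.one_apply_eq] at h
  calc ∑ i, (U i k)^2 = ∑ i, U i k * U i k := by simp [pow_two]
  _ = 1 := h

lemma LSaux.rowsum_le {p r : ℕ} (μ : ℝ) (U : Matrix (Fin p) (Fin r) ℝ) (hμ : 0 ≤ μ * r / p)
    (h : ∀ i, Real.sqrt (∑ k, (U i k)^2) ≤ Real.sqrt (μ * r / p)) (i : Fin p) :
    ∑ k, (U i k)^2 ≤ μ * r / p := by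
  have h0 : 0 ≤ ∑ k, (U i k)^2 := Finset.sum_nonneg fun _ _ => sq_nonneg _
  nlinarith [h i, Real.sq_sqrt h0, Real.sq_sqrt hμ, Real.sqrt_nonneg (μ*r/(p:ℝ)),
    Real.sqrt_nonneg (∑ k, (U i k)^2)]

lemma LSaux.entry_formula {m n r : ℕ} (U : Matrix (Fin m) (Fin r) ℝ) (d : Fin r → ℝ)
    (V : Matrix (Fin n) (Fin r) ℝ) (i : Fin m) (j : Fin n) :
    (U * Matrix.diagonal d * Vᵀ) i j = ∑ k, U i k * (d k * V j k) := by
  rw [Matrix.mul_apply]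
  simp only [Matrix.mul_diagonal, Matrix.transpose_apply]
  exact Finset.sum_congr rfl fun k _ => by ring

lemma LSaux.dk_sq_le {m n r : ℕ} (U : Matrix (Fin m) (Fin r) ℝ) (d : Fin r → ℝ)
    (V : Matrix (Fin n) (Fin r) ℝ) (L : Matrix (Fin m) (Fin n) ℝ)
    (hU : Uᵀ * U = 1) (hV : Vᵀ * V = 1) (hfac : L = U * Matrix.diagonal d * Vᵀ) (k : Fin r) :
    (d k)^2 ≤ frobSq L := by
  have hD : Uᵀ * L * V = Matrix.diagonal d := by
    rw [hfac]
    simp only [← Matrix.mul_assoc]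
    rw [hU, Matrix.one_mul, Matrix.mul_assoc, hV, Matrix.mul_one]
  have hdk : d k = ∑ i, U i k * (∑ j, L i j * V j k) := by
    have h := congrFun (congrFun hD k) k
    simp only [Matrix.diagonal_apply_eq] at h
    rw [← h]
    simp only [Matrix.mul_apply, Matrix.transpose_apply]
    calc ∑ j, (∑ i, U i k * L i j) * V j k
        = ∑ j, ∑ i, U i k * (L i j * V j k) := by
          refine Finset.sum_congr rfl fun j _ => ?_
          rw [Finset.sum_mul]
          exact Finset.sum_congr rfl fun i _ => by ring
      _ = ∑ i, ∑ j, U i k * (L i j * V j k) := Finset.sum_comm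
      _ = ∑ i, U i k * ∑ j, L i j * V j k := by
          exact Finset.sum_congr rfl fun i _ => by rw [Finset.mul_sum]
  have hcs := Finset.sum_mul_sq_le_sq_mul_sq Finset.univ (fun i => U i k)
      (fun i => ∑ j, L i j * V j k)
  have hw : ∀ i, (∑ j, L i j * V j k)^2 ≤ ∑ j, (L i j)^2 := by
    intro i
    have h2 := Finset.sum_mul_sq_le_sq_mul_sq Finset.univ (fun j => L i j) (fun j => V j k)
    have hV1 := LSaux.colsum_one V hV k
    calc (∑ j, L i j * V j k)^2 ≤ (∑ j, (L i j)^2) * ∑ j, (V j k)^2 := h2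
    _ = ∑ j, (L i j)^2 := by rw [hV1, mul_one]
  calc (d k)^2 = (∑ i, U i k * (∑ j, L i j * V j k))^2 := by rw [hdk]
  _ ≤ (∑ i, (U i k)^2) * ∑ i, (∑ j, L i j * V j k)^2 := hcs
  _ = ∑ i, (∑ j, L i j * V j k)^2 := by rw [LSaux.colsum_one U hU k, one_mul]
  _ ≤ ∑ i, ∑ j, (L i j)^2 := Finset.sum_le_sum fun i _ => hw i
  _ = frobSq L := rfl

lemma LSaux.frobSq_nonneg {m n : ℕ} (A : Matrix (Fin m) (Fin n) ℝ) : 0 ≤ frobSq A :=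
  Finset.sum_nonneg fun _ _ => Finset.sum_nonneg fun _ _ => sq_nonneg _

lemma LSaux.entry_sq_le {m n r : ℕ} (μ : ℝ) (hm : 0 < m) (hn : 0 < n) (hμ0 : 0 ≤ μ)
    (U : Matrix (Fin m) (Fin r) ℝ) (d : Fin r → ℝ) (V : Matrix (Fin n) (Fin r) ℝ)
    (L : Matrix (Fin m) (Fin n) ℝ)
    (hU : Uᵀ * U = 1) (hV : Vᵀ * V = 1) (hfac : L = U * Matrix.diagonal d * Vᵀ)
    (hrU : ∀ i, Real.sqrt (∑ k, (U i k)^2) ≤ Real.sqrt (μ * r / m))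
    (hrV : ∀ j, Real.sqrt (∑ k, (V j k)^2) ≤ Real.sqrt (μ * r / n))
    (i : Fin m) (j : Fin n) :
    (L i j)^2 ≤ (μ * r / m) * ((μ * r / n) * frobSq L) := by
  have hμm : 0 ≤ μ * r / m := by positivity
  have hμn : 0 ≤ μ * r / n := by positivity
  have hLij : L i j = ∑ k, U i k * (d k * V j k) := by rw [hfac, LSaux.entry_formula]
  have hcs := Finset.sum_mul_sq_le_sq_mul_sq Finset.univ (fun k => U i k) (fun k => d k * V j k)
  have hsum2 : ∑ k, (d k * V j k)^2 ≤ frobSq L * ∑ k, (V j k)^2 := by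
    rw [Finset.mul_sum]
    refine Finset.sum_le_sum fun k _ => ?_
    have := LSaux.dk_sq_le U d V L hU hV hfac k
    have h2 : (d k * V j k)^2 = (d k)^2 * (V j k)^2 := by ring
    rw [h2]
    exact mul_le_mul_of_nonneg_right this (sq_nonneg _)
  have hVr : ∑ k, (V j k)^2 ≤ μ * r / n := LSaux.rowsum_le μ V hμn hrV j
  have hUr : ∑ k, (U i k)^2 ≤ μ * r / m := LSaux.rowsum_le μ U hμm hrU i
  have hs0 : (0:ℝ) ≤ ∑ k, (d k * V j k)^2 := Finset.sum_nonneg fun _ _ => sq_nonneg _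
  have hf0 : 0 ≤ frobSq L := LSaux.frobSq_nonneg L
  calc (L i j)^2 = (∑ k, U i k * (d k * V j k))^2 := by rw [hLij]
  _ ≤ (∑ k, (U i k)^2) * ∑ k, (d k * V j k)^2 := hcs
  _ ≤ (μ * r / m) * (frobSq L * ∑ k, (V j k)^2) := by
      refine mul_le_mul hUr ?_ hs0 hμm
      calc ∑ k, (d k * V j k)^2 ≤ frobSq L * ∑ k, (V j k)^2 := hsum2
      _ ≤ frobSq L * ∑ k, (V j k)^2 := le_refl _
  _ ≤ (μ * r / m) * ((μ * r / n) * frobSq L) := by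
      refine mul_le_mul_of_nonneg_left ?_ hμm
      rw [mul_comm (μ * r / n) (frobSq L)]
      exact mul_le_mul_of_nonneg_left hVr hf0

lemma LSaux.key_bound {m n r s : ℕ} (μ : ℝ) (hm : 0 < m) (hn : 0 < n) (hμ0 : 0 ≤ μ)
    (U : Matrix (Fin m) (Fin r) ℝ) (d : Fin r → ℝ) (V : Matrix (Fin n) (Fin r) ℝ)
    (L X : Matrix (Fin m) (Fin n) ℝ)
    (hU : Uᵀ * U = 1) (hV : Vᵀ * V = 1) (hfac : L = U * Matrix.diagonal d * Vᵀ)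
    (hrU : ∀ i, Real.sqrt (∑ k, (U i k)^2) ≤ Real.sqrt (μ * r / m))
    (hrV : ∀ j, Real.sqrt (∑ k, (V j k)^2) ≤ Real.sqrt (μ * r / n))
    (Ω : Finset (Fin m × Fin n)) (hcard : Ω.card ≤ s)
    (hmatch : ∀ q : Fin m × Fin n, q ∉ Ω → X q.1 q.2 = L q.1 q.2) :
    (1 - (s:ℝ) * μ^2 * r^2 / (m*n)) * frobSq L ≤ frobSq X := by
  have hfrobL : frobSq L = ∑ q : Fin m × Fin n, (L q.1 q.2)^2 := by
    rw [Fintype.sum_prod_type]; rfl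
  have hfrobX : frobSq X = ∑ q : Fin m × Fin n, (X q.1 q.2)^2 := by
    rw [Fintype.sum_prod_type]; rfl
  have hsplit : ∑ q ∈ Ω, (L q.1 q.2)^2 + ∑ q ∈ Ωᶜ, (L q.1 q.2)^2 = frobSq L := by
    rw [hfrobL]; exact Finset.sum_add_sum_compl Ω _
  have h1 : ∑ q ∈ Ω, (L q.1 q.2)^2 ≤ (s:ℝ) * μ^2 * r^2 / (m*n) * frobSq L := by
    have hb := Finset.sum_le_card_nsmul Ω (fun q => (L q.1 q.2)^2)
      ((μ * r / m) * ((μ * r / n) * frobSq L))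
      (fun q _ => LSaux.entry_sq_le μ hm hn hμ0 U d V L hU hV hfac hrU hrV q.1 q.2)
    rw [nsmul_eq_mul] at hb
    refine hb.trans ?_
    have hm0 : (m:ℝ) ≠ 0 := Nat.cast_ne_zero.mpr hm.ne'
    have hn0 : (n:ℝ) ≠ 0 := Nat.cast_ne_zero.mpr hn.ne'
    have heq : (μ * r / m) * ((μ * r / n) * frobSq L) = μ^2 * r^2 / (m*n) * frobSq L := by
      field_simp
    rw [heq]
    have hcard' : (Ω.card : ℝ) ≤ (s:ℝ) := Nat.cast_le.mpr hcard
    have hA : 0 ≤ μ^2 * r^2 / ((m:ℝ)*n) * frobSq L := by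
      have := LSaux.frobSq_nonneg L; positivity
    calc (Ω.card : ℝ) * (μ^2 * r^2 / (m*n) * frobSq L)
        ≤ (s:ℝ) * (μ^2 * r^2 / (m*n) * frobSq L) := mul_le_mul_of_nonneg_right hcard' hA
      _ = (s:ℝ) * μ^2 * r^2 / (m*n) * frobSq L := by ring
  have h2 : ∑ q ∈ Ωᶜ, (L q.1 q.2)^2 ≤ frobSq X := by
    have heq : ∀ q ∈ Ωᶜ, (L q.1 q.2)^2 = (X q.1 q.2)^2 := fun q hq => by
      rw [hmatch q (Finset.mem_compl.mp hq)]
    rw [Finset.sum_congr rfl heq, hfrobX]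
    exact Finset.sum_le_sum_of_subset_of_nonneg (Finset.subset_univ _) fun q _ _ => sq_nonneg _
  linarith

lemma LSaux.c_lt_one {m n r s : ℕ} (μ : ℝ) (hm : 0 < m) (hn : 0 < n) (hr : 0 < r) (hs : 0 < s)
    (hμ1 : 1 ≤ μ) (hμ : μ < Real.sqrt (m * n) / ((r : ℝ) * Real.sqrt s)) :
    (s:ℝ) * μ^2 * r^2 / (m*n) < 1 := by
  have hs0 : (0:ℝ) < Real.sqrt s := Real.sqrt_pos.mpr (by exact_mod_cast hs)
  have hr0 : (0:ℝ) < r := by exact_mod_cast hr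
  have hrs : (0:ℝ) < (r:ℝ) * Real.sqrt s := by positivity
  have h1 : μ * ((r:ℝ) * Real.sqrt s) < Real.sqrt ((m:ℝ) * n) := (lt_div_iff₀ hrs).mp hμ
  have hμ0 : (0:ℝ) < μ := lt_of_lt_of_le one_pos hμ1
  have hmn0 : (0:ℝ) ≤ (m:ℝ) * n := by positivity
  have hsq : (μ * ((r:ℝ) * Real.sqrt s))^2 < (Real.sqrt ((m:ℝ)*n))^2 := by
    apply pow_lt_pow_left₀ h1 (by positivity)
    norm_num
  rw [Real.sq_sqrt hmn0] at hsq
  have hss : (Real.sqrt (s:ℝ))^2 = (s:ℝ) := Real.sq_sqrt (by positivity)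
  have hexp : (μ * ((r:ℝ) * Real.sqrt s))^2 = μ^2 * (r:ℝ)^2 * (Real.sqrt (s:ℝ))^2 := by ring
  rw [hexp, hss] at hsq
  have hmn0' : (0:ℝ) < (m:ℝ) * n := by positivity
  rw [div_lt_one hmn0']
  nlinarith

instance LSaux.seqSpace (m n : ℕ) : SequentialSpace (Matrix (Fin m) (Fin n) ℝ) :=
  inferInstanceAs (SequentialSpace (Fin m → Fin n → ℝ))

/-- the pieces of the union -/
def LSaux.A (m n r : ℕ) (μ : ℝ) (Ω : Finset (Fin m × Fin n)) : Set (Matrix (Fin m) (Fin n) ℝ) :=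
  {X | ∃ L, Incoherent μ r L ∧ ∀ q : Fin m × Fin n, q ∉ Ω → X q.1 q.2 = L q.1 q.2}

lemma LSaux.LS_eq_union (m n r s : ℕ) (μ : ℝ) :
    LS m n r s μ =
      ⋃ Ω ∈ Finset.filter (fun Ω : Finset (Fin m × Fin n) => Ω.card ≤ s) Finset.univ,
        LSaux.A m n r μ Ω := by
  classical
  ext X
  simp only [Set.mem_iUnion, Finset.mem_filter, Finset.mem_univ, true_and, exists_prop]
  constructor
  · rintro ⟨L, S, hXLS, hInc, hsp⟩
    refine ⟨Finset.filter (fun q : Fin m × Fin n => S q.1 q.2 ≠ 0) Finset.univ, ?_, L, hInc, ?_⟩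
    · have hset : {q : Fin m × Fin n | S q.1 q.2 ≠ 0} =
          ↑(Finset.filter (fun q : Fin m × Fin n => S q.1 q.2 ≠ 0) Finset.univ) := by
        ext q; simp
      have : sparseCount S =
          (Finset.filter (fun q : Fin m × Fin n => S q.1 q.2 ≠ 0) Finset.univ).card := by
        rw [sparseCount, hset, Set.ncard_coe_finset]
      omega
    · intro q hq
      simp only [Finset.mem_filter, Finset.mem_univ, true_and, not_not] at hq
      rw [hXLS]
      show L q.1 q.2 + S q.1 q.2 = L q.1 q.2
      rw [hq, add_zero]
  · rintro ⟨Ω, hcard, L, hInc, hmatch⟩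
    refine ⟨L, X - L, by abel, hInc, ?_⟩
    have hsub : {q : Fin m × Fin n | (X - L) q.1 q.2 ≠ 0} ⊆ ↑Ω := by
      intro q hq
      by_contra hqΩ
      have : X q.1 q.2 = L q.1 q.2 := hmatch q (by simpa using hqΩ)
      exact hq (by simp [Matrix.sub_apply, this])
    calc sparseCount (X - L) ≤ (↑Ω : Set (Fin m × Fin n)).ncard :=
          Set.ncard_le_ncard hsub (Finset.finite_toSet Ω)
      _ = Ω.card := Set.ncard_coe_finset Ω
      _ ≤ s := hcard

lemma LSaux.A_isClosed (m n r s : ℕ) (hm : 0 < m) (hn : 0 < n) (hr : 0 < r) (hs : 0 < s)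
    (μ : ℝ) (hμ1 : 1 ≤ μ) (hμ : μ < Real.sqrt (m * n) / ((r : ℝ) * Real.sqrt s))
    (Ω : Finset (Fin m × Fin n)) (hcard : Ω.card ≤ s) :
    IsClosed (LSaux.A m n r μ Ω) := by
  classical
  set c : ℝ := (s:ℝ) * μ^2 * r^2 / (m*n) with hc
  have hc1 : c < 1 := LSaux.c_lt_one μ hm hn hr hs hμ1 hμ
  have hc0 : 0 ≤ c := by
    have hμ0 : (0:ℝ) ≤ μ := le_trans zero_le_one hμ1
    positivity
  have hμ0 : (0:ℝ) ≤ μ := le_trans zero_le_one hμ1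
  apply IsSeqClosed.isClosed
  intro Y X hmem htend
  choose L hL using hmem
  have hInc : ∀ k, Incoherent μ r (L k) := fun k => (hL k).1
  have hmatch : ∀ k (q : Fin m × Fin n), q ∉ Ω → Y k q.1 q.2 = L k q.1 q.2 :=
    fun k => (hL k).2
  have hdata : ∀ k, ∃ (U : Matrix (Fin m) (Fin r) ℝ) (d : Fin r → ℝ)
      (V : Matrix (Fin n) (Fin r) ℝ),
      Uᵀ * U = 1 ∧ Vᵀ * V = 1 ∧ (∀ l, 0 ≤ d l) ∧ L k = U * Matrix.diagonal d * Vᵀ ∧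
      (∀ i, Real.sqrt (∑ l, (U i l) ^ 2) ≤ Real.sqrt (μ * r / m)) ∧
      (∀ j, Real.sqrt (∑ l, (V j l) ^ 2) ≤ Real.sqrt (μ * r / n)) := fun k => (hInc k).2
  choose U d V hU hV hd hfac hrU hrV using hdata
  -- entrywise convergence of Y
  have hent : ∀ i j, Filter.Tendsto (fun k => Y k i j) Filter.atTop (nhds (X i j)) :=
    fun i j => tendsto_pi_nhds.mp (tendsto_pi_nhds.mp htend i) j
  -- frobSq (Y k) is bounded
  have hfs : Filter.Tendsto (fun k => frobSq (Y k)) Filter.atTop (nhds (frobSq X)) := by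
    apply tendsto_finset_sum
    intro i _
    apply tendsto_finset_sum
    intro j _
    exact (hent i j).pow 2
  obtain ⟨C, hC⟩ := hfs.bddAbove_range
  have hCk : ∀ k, frobSq (Y k) ≤ C := fun k => hC ⟨k, rfl⟩
  -- bound on frobSq (L k)
  set B : ℝ := C / (1 - c) with hB
  have h1c : (0:ℝ) < 1 - c := by linarith
  have hLB : ∀ k, frobSq (L k) ≤ B := by
    intro k
    have hk := LSaux.key_bound μ hm hn hμ0 (U k) (d k) (V k) (L k) (Y k)
      (hU k) (hV k) (hfac k) (hrU k) (hrV k) Ω hcard (hmatch k)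
    rw [← hc] at hk
    rw [hB, le_div_iff₀ h1c]
    calc frobSq (L k) * (1 - c) = (1 - c) * frobSq (L k) := by ring
    _ ≤ frobSq (Y k) := hk
    _ ≤ C := hCk k
  have hB0 : 0 ≤ B := le_trans (LSaux.frobSq_nonneg (L 0)) (hLB 0)
  -- bounds for the SVD data
  have hUbd : ∀ k i l, U k i l ∈ Set.Icc (-1:ℝ) 1 := by
    intro k i l
    have h1 : (U k i l)^2 ≤ 1 := by
      have := LSaux.colsum_one (U k) (hU k) l
      have hle : (U k i l)^2 ≤ ∑ i', (U k i' l)^2 :=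
        Finset.single_le_sum (f := fun i' => (U k i' l)^2) (fun _ _ => sq_nonneg _)
          (Finset.mem_univ i)
      linarith
    constructor <;> nlinarith
  have hVbd : ∀ k j l, V k j l ∈ Set.Icc (-1:ℝ) 1 := by
    intro k j l
    have h1 : (V k j l)^2 ≤ 1 := by
      have := LSaux.colsum_one (V k) (hV k) l
      have hle : (V k j l)^2 ≤ ∑ j', (V k j' l)^2 :=
        Finset.single_le_sum (f := fun j' => (V k j' l)^2) (fun _ _ => sq_nonneg _)
          (Finset.mem_univ j)
      linarith
    constructor <;> nlinarith
  have hdbd : ∀ k l, d k l ∈ Set.Icc (0:ℝ) (Real.sqrt B) := by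
    intro k l
    refine ⟨hd k l, ?_⟩
    have h2 : (d k l)^2 ≤ B := le_trans (LSaux.dk_sq_le (U k) (d k) (V k) (L k)
      (hU k) (hV k) (hfac k) l) (hLB k)
    calc d k l = Real.sqrt ((d k l)^2) := (Real.sqrt_sq (hd k l)).symm
    _ ≤ Real.sqrt B := Real.sqrt_le_sqrt h2
  -- compactness argument
  set T : ℕ → (Fin m → Fin r → ℝ) × ((Fin r → ℝ) × (Fin n → Fin r → ℝ)) :=
    fun k => (U k, d k, V k) with hT
  set K : Set ((Fin m → Fin r → ℝ) × ((Fin r → ℝ) × (Fin n → Fin r → ℝ))) :=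
    (Set.univ.pi fun _ => Set.univ.pi fun _ => Set.Icc (-1:ℝ) 1) ×ˢ
      ((Set.univ.pi fun _ => Set.Icc (0:ℝ) (Real.sqrt B)) ×ˢ
        (Set.univ.pi fun _ => Set.univ.pi fun _ => Set.Icc (-1:ℝ) 1)) with hK
  have hKcomp : IsCompact K :=
    ((isCompact_univ_pi fun _ => isCompact_univ_pi fun _ => isCompact_Icc).prod
      ((isCompact_univ_pi fun _ => isCompact_Icc).prod
        (isCompact_univ_pi fun _ => isCompact_univ_pi fun _ => isCompact_Icc)))
  have hTK : ∀ k, T k ∈ K := by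
    intro k
    refine ⟨?_, ?_, ?_⟩
    · intro i _; intro l _; exact hUbd k i l
    · intro l _; exact hdbd k l
    · intro j _; intro l _; exact hVbd k j l
  obtain ⟨⟨U', d', V'⟩, hmemK, φ, hφ, hTt⟩ := hKcomp.tendsto_subseq hTK
  -- componentwise convergence
  have hUt : ∀ i l, Filter.Tendsto (fun k => U (φ k) i l) Filter.atTop (nhds (U' i l)) := by
    intro i l
    have h1 : Filter.Tendsto (fun k => (T (φ k)).1) Filter.atTop (nhds U') :=
      (continuous_fst.tendsto _).comp hTt
    exact tendsto_pi_nhds.mp (tendsto_pi_nhds.mp h1 i) l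
  have hdt : ∀ l, Filter.Tendsto (fun k => d (φ k) l) Filter.atTop (nhds (d' l)) := by
    intro l
    have h1 : Filter.Tendsto (fun k => (T (φ k)).2.1) Filter.atTop (nhds d') :=
      (continuous_snd.fst.tendsto _).comp hTt
    exact tendsto_pi_nhds.mp h1 l
  have hVt : ∀ j l, Filter.Tendsto (fun k => V (φ k) j l) Filter.atTop (nhds (V' j l)) := by
    intro j l
    have h1 : Filter.Tendsto (fun k => (T (φ k)).2.2) Filter.atTop (nhds V') :=
      (continuous_snd.snd.tendsto _).comp hTt
    exact tendsto_pi_nhds.mp (tendsto_pi_nhds.mp h1 j) l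
  -- the limit matrices
  set Ulim : Matrix (Fin m) (Fin r) ℝ := U' with hUlim
  set dlim : Fin r → ℝ := d' with hdlim
  set Vlim : Matrix (Fin n) (Fin r) ℝ := V' with hVlim
  set LL : Matrix (Fin m) (Fin n) ℝ := Ulim * Matrix.diagonal dlim * Vlimᵀ with hLL
  -- entrywise limit of L (φ k)
  have hLt : ∀ i j, Filter.Tendsto (fun k => L (φ k) i j) Filter.atTop (nhds (LL i j)) := by
    intro i j
    have hform : ∀ k, L (φ k) i j = ∑ l, U (φ k) i l * (d (φ k) l * V (φ k) j l) := by
      intro k; rw [hfac (φ k), LSaux.entry_formula]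
    have hlim : LL i j = ∑ l, Ulim i l * (dlim l * Vlim j l) := by
      rw [hLL, LSaux.entry_formula]
    rw [hlim]
    simp only [hform]
    apply tendsto_finset_sum
    intro l _
    exact (hUt i l).mul ((hdt l).mul (hVt j l))
  -- orthonormality in the limit
  have hU'orth : Ulimᵀ * Ulim = 1 := by
    ext a b
    have hval : ∀ k, ((U (φ k))ᵀ * U (φ k)) a b = (1 : Matrix (Fin r) (Fin r) ℝ) a b := by
      intro k; rw [hU (φ k)]
    have hcalc : ∀ k, ∑ i, U (φ k) i a * U (φ k) i b
        = (1 : Matrix (Fin r) (Fin r) ℝ) a b := by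
      intro k
      rw [← hval k]
      simp [Matrix.mul_apply, Matrix.transpose_apply]
    have hlim : Filter.Tendsto (fun k => ∑ i, U (φ k) i a * U (φ k) i b) Filter.atTop
        (nhds (∑ i, Ulim i a * Ulim i b)) := by
      apply tendsto_finset_sum
      intro i _
      exact (hUt i a).mul (hUt i b)
    have heq : (∑ i, Ulim i a * Ulim i b) = (1 : Matrix (Fin r) (Fin r) ℝ) a b := by
      refine tendsto_nhds_unique hlim ?_
      simp only [hcalc]
      exact tendsto_const_nhds
    rw [← heq]
    simp [Matrix.mul_apply, Matrix.transpose_apply]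
  have hV'orth : Vlimᵀ * Vlim = 1 := by
    ext a b
    have hcalc : ∀ k, ∑ j, V (φ k) j a * V (φ k) j b
        = (1 : Matrix (Fin r) (Fin r) ℝ) a b := by
      intro k
      rw [← hV (φ k)]
      simp [Matrix.mul_apply, Matrix.transpose_apply]
    have hlim : Filter.Tendsto (fun k => ∑ j, V (φ k) j a * V (φ k) j b) Filter.atTop
        (nhds (∑ j, Vlim j a * Vlim j b)) := by
      apply tendsto_finset_sum
      intro j _
      exact (hVt j a).mul (hVt j b)
    have heq : (∑ j, Vlim j a * Vlim j b) = (1 : Matrix (Fin r) (Fin r) ℝ) a b := by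
      refine tendsto_nhds_unique hlim ?_
      simp only [hcalc]
      exact tendsto_const_nhds
    rw [← heq]
    simp [Matrix.mul_apply, Matrix.transpose_apply]
  -- nonnegativity of dlim
  have hd' : ∀ l, 0 ≤ dlim l := by
    intro l
    exact ge_of_tendsto (hdt l) (Filter.Eventually.of_forall fun k => hd (φ k) l)
  -- row bounds in the limit
  have hrU' : ∀ i, Real.sqrt (∑ l, (Ulim i l)^2) ≤ Real.sqrt (μ * r / m) := by
    intro i
    apply Real.sqrt_le_sqrt
    have hμm : 0 ≤ μ * (r:ℝ) / m := by positivity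
    have hlim : Filter.Tendsto (fun k => ∑ l, (U (φ k) i l)^2) Filter.atTop
        (nhds (∑ l, (Ulim i l)^2)) := by
      apply tendsto_finset_sum
      intro l _
      exact (hUt i l).pow 2
    exact le_of_tendsto hlim (Filter.Eventually.of_forall fun k =>
      LSaux.rowsum_le μ (U (φ k)) hμm (hrU (φ k)) i)
  have hrV' : ∀ j, Real.sqrt (∑ l, (Vlim j l)^2) ≤ Real.sqrt (μ * r / n) := by
    intro j
    apply Real.sqrt_le_sqrt
    have hμn : 0 ≤ μ * (r:ℝ) / n := by positivity
    have hlim : Filter.Tendsto (fun k => ∑ l, (V (φ k) j l)^2) Filter.atTop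
        (nhds (∑ l, (Vlim j l)^2)) := by
      apply tendsto_finset_sum
      intro l _
      exact (hVt j l).pow 2
    exact le_of_tendsto hlim (Filter.Eventually.of_forall fun k =>
      LSaux.rowsum_le μ (V (φ k)) hμn (hrV (φ k)) j)
  -- rank bound
  have hrank : LL.rank ≤ r := by
    calc LL.rank ≤ (Ulim * Matrix.diagonal dlim).rank := Matrix.rank_mul_le_left _ _
    _ ≤ Ulim.rank := Matrix.rank_mul_le_left _ _
    _ ≤ r := Matrix.rank_le_width Ulim
  -- X matches LL off Ω
  refine ⟨LL, ⟨hrank, Ulim, dlim, Vlim, hU'orth, hV'orth, hd', rfl, hrU', hrV'⟩, ?_⟩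
  intro q hq
  have h1 : Filter.Tendsto (fun k => Y (φ k) q.1 q.2) Filter.atTop (nhds (X q.1 q.2)) :=
    (hent q.1 q.2).comp hφ.tendsto_atTop
  have h2 : Filter.Tendsto (fun k => Y (φ k) q.1 q.2) Filter.atTop (nhds (LL q.1 q.2)) := by
    have := hLt q.1 q.2
    refine this.congr fun k => ?_
    exact (hmatch (φ k) q hq).symm
  exact tendsto_nhds_unique h1 h2

/-- `LS_{m,n}(r,s,μ)` is a closed subset of `ℝ^{m×n}` when
`1 ≤ μ < √(mn)/(r√s)`. -/
theorem LS_isClosed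
    (m n r s : ℕ) (hm : 0 < m) (hn : 0 < n) (hr : 0 < r) (hs : 0 < s)
    (μ : ℝ) (hμ1 : 1 ≤ μ) (hμ : μ < Real.sqrt (m * n) / ((r : ℝ) * Real.sqrt s)) :
    IsClosed (LS m n r s μ) := by
  
  classical
  rw [LSaux.LS_eq_union]
  apply isClosed_biUnion_finset
  intro Ω hΩ
  exact LSaux.A_isClosed m n r s hm hn hr hs μ hμ1 hμ Ω (Finset.mem_filter.mp hΩ).2
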